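/- Every edge-coloured complete graph on n ≥ 2 vertices without a rainbow triangle has a colour class of size at least n-1. -/

import Mathlib

open SimpleGraph

/-- A connected graph on `n` vertices has at least `n - 1` edges. -/
lemma conn_card_le_aux {V : Type*} [Fintype V] [DecidableEq V] (G : SimpleGraph V)
    [DecidableRel G.Adj] (hG : G.Connected) :
    Fintype.card V - 1 ≤ G.edgeFinset.card := by
  classical
  obtain ⟨v₀⟩ := hG.nonempty
  have key : ∀ x : V, x ≠ v₀ → ∃ y, G.Adj x y ∧ G.dist y v₀ < G.dist x v₀ := by
    intro x hx
    have hr : G.Reachable x v₀ := hG.preconnected x v₀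
    obtain ⟨p, hp⟩ := hr.exists_walk_length_eq_dist
    cases p with
    | nil => exact absurd rfl hx
    | @cons _ w _ h q =>
        refine ⟨_, h, ?_⟩
        have h1 : G.dist w v₀ ≤ q.length := SimpleGraph.dist_le q
        simp [SimpleGraph.Walk.length_cons] at hp
        omega
  choose f hf1 hf2 using key
  have hmaps : ∀ x ∈ Finset.univ.erase v₀,
      (if h : x = v₀ then s(x, x) else s(x, f x h)) ∈ G.edgeFinset := by
    intro x hx
    have hx' : x ≠ v₀ := (Finset.mem_erase.mp hx).1
    rw [dif_neg hx', SimpleGraph.mem_edgeFinset, SimpleGraph.mem_edgeSet]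
    exact hf1 x hx'
  have hinj : Set.InjOn (fun x : V => if h : x = v₀ then s(x, x) else s(x, f x h))
      ((Finset.univ.erase v₀ : Finset V) : Set V) := by
    intro x hx y hy hxy
    have hx' : x ≠ v₀ := (Finset.mem_erase.mp hx).1
    have hy' : y ≠ v₀ := (Finset.mem_erase.mp hy).1
    simp only [dif_neg hx', dif_neg hy', Sym2.eq_iff] at hxy
    rcases hxy with ⟨h1, _⟩ | ⟨h1, h2⟩
    · exact h1
    · exfalso
      have a1 := hf2 x hx'
      have a2 := hf2 y hy'
      rw [h2] at a1
      rw [← h1] at a2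
      omega
  calc Fintype.card V - 1 = (Finset.univ.erase v₀).card := by
        rw [Finset.card_erase_of_mem (Finset.mem_univ v₀), Finset.card_univ]
    _ ≤ G.edgeFinset.card := Finset.card_le_card_of_injOn _ hmaps hinj

/-- Every edge-coloured complete graph on `n ≥ 2` vertices without a
rainbow triangle has a colour class of size at least `n - 1`. -/
theorem stmt4 {V : Type*} [Fintype V] [DecidableEq V] (hn : 2 ≤ Fintype.card V)
    {ι : Type*} [DecidableEq ι] (col : Sym2 V → ι)
    (hrb : ¬ ∃ x y z : V, x ≠ y ∧ y ≠ z ∧ x ≠ z ∧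
      col s(x, y) ≠ col s(y, z) ∧ col s(y, z) ≠ col s(x, z) ∧ col s(x, y) ≠ col s(x, z)) :
    ∃ i : ι, Fintype.card V - 1 ≤
      (((⊤ : SimpleGraph V).edgeFinset).filter (fun e => col e = i)).card := by
  classical
  push_neg at hrb
  -- Step relation within a finset, with colour `i`.
  set R : ι → Finset V → V → V → Prop :=
    fun i s a b => a ∈ s ∧ b ∈ s ∧ a ≠ b ∧ col s(a, b) = i with hR
  have main : ∀ s : Finset V, 2 ≤ s.card → ∃ i, ∀ x ∈ s, ∀ y ∈ s,
      Relation.ReflTransGen (R i s) x y := by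
    intro s
    induction s using Finset.strongInduction with
    | _ s ih =>
      intro hs
      rcases eq_or_lt_of_le hs with h2 | h3
      · -- base case : |s| = 2
        obtain ⟨x, y, hxy, rfl⟩ := Finset.card_eq_two.mp h2.symm
        refine ⟨col s(x, y), ?_⟩
        have hx : x ∈ ({x, y} : Finset V) := by simp
        have hy : y ∈ ({x, y} : Finset V) := by simp
        have step1 : Relation.ReflTransGen (R (col s(x,y)) {x,y}) x y :=
          Relation.ReflTransGen.single ⟨hx, hy, hxy, rfl⟩
        have step2 : Relation.ReflTransGen (R (col s(x,y)) {x,y}) y x :=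
          Relation.ReflTransGen.single ⟨hy, hx, hxy.symm, by rw [Sym2.eq_swap]⟩
        intro a ha b hb
        simp only [Finset.mem_insert, Finset.mem_singleton] at ha hb
        rcases ha with rfl | rfl <;> rcases hb with rfl | rfl
        · exact Relation.ReflTransGen.refl
        · exact step1
        · exact step2
        · exact Relation.ReflTransGen.refl
      · -- inductive step : |s| ≥ 3
        obtain ⟨v, hv⟩ := Finset.card_pos.mp (show 0 < s.card by omega)
        set t := s.erase v with ht
        have htss : t ⊂ s := Finset.erase_ssubset hv
        have htsub : t ⊆ s := htss.subset
        have htcard : 2 ≤ t.card := by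
          rw [ht, Finset.card_erase_of_mem hv]; omega
        obtain ⟨i, hreach⟩ := ih t htss htcard
        have hmono : ∀ {a b}, Relation.ReflTransGen (R i t) a b →
            Relation.ReflTransGen (R i s) a b := by
          intro a b h
          exact Relation.ReflTransGen.mono (p := R i s)
            (fun a b ⟨h1, h2, h3, h4⟩ => ⟨htsub h1, htsub h2, h3, h4⟩) _ _ h
        by_cases hcase : ∃ x ∈ t, col s(v, x) = i
        · obtain ⟨x, hxT, hxcol⟩ := hcase
          have hxv : x ≠ v := (Finset.mem_erase.mp hxT).1
          have svx : Relation.ReflTransGen (R i s) v x :=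
            Relation.ReflTransGen.single ⟨hv, htsub hxT, hxv.symm, hxcol⟩
          have sxv : Relation.ReflTransGen (R i s) x v :=
            Relation.ReflTransGen.single
              ⟨htsub hxT, hv, hxv, by rw [Sym2.eq_swap]; exact hxcol⟩
          refine ⟨i, ?_⟩
          intro a ha b hb
          by_cases hav : a = v <;> by_cases hbv : b = v
          · subst hav; subst hbv; exact Relation.ReflTransGen.refl
          · subst hav
            exact svx.trans (hmono (hreach x hxT b (Finset.mem_erase.mpr ⟨hbv, hb⟩)))
          · subst hbv
            exact (hmono (hreach a (Finset.mem_erase.mpr ⟨hav, ha⟩) x hxT)).trans sxv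
          · exact hmono (hreach a (Finset.mem_erase.mpr ⟨hav, ha⟩)
              b (Finset.mem_erase.mpr ⟨hbv, hb⟩))
        · push_neg at hcase
          -- all edges from v to t avoid colour i; they must all share one colour
          have hstep : ∀ a b : V, R i t a b → col s(v, a) = col s(v, b) := by
            intro a b ⟨haT, hbT, hab, habcol⟩
            by_contra hne
            have hav : a ≠ v := (Finset.mem_erase.mp haT).1
            have hbv : b ≠ v := (Finset.mem_erase.mp hbT).1
            have h1 := hrb a b v hab hbv hav
            have hca : col s(v, a) = col s(a, v) := by rw [Sym2.eq_swap]
            have hcb : col s(v, b) = col s(b, v) := by rw [Sym2.eq_swap]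
            have e1 : col s(a, b) ≠ col s(b, v) := by
              rw [habcol, ← hcb]; exact (hcase b hbT).symm
            have e2 : col s(b, v) ≠ col s(a, v) := by
              rw [← hca, ← hcb]; exact fun h => hne h.symm
            have e3 : col s(a, b) ≠ col s(a, v) := by
              rw [habcol, ← hca]; exact (hcase a haT).symm
            exact e3 (h1 e1 e2)
          have hconst : ∀ x ∈ t, ∀ y ∈ t, col s(v, x) = col s(v, y) := by
            intro x hx y hy
            have h := hreach x hx y hy
            induction h with
            | refl => rfl
            | tail _ hstep' ih' =>
                exact (ih' hstep'.1).trans (hstep _ _ hstep')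
          obtain ⟨x₀, hx₀⟩ := Finset.card_pos.mp (by omega : 0 < t.card)
          set j := col s(v, x₀) with hj
          have hallj : ∀ x ∈ t, col s(v, x) = j := fun x hx => hconst x hx x₀ hx₀
          refine ⟨j, ?_⟩
          have hto : ∀ a ∈ s, Relation.ReflTransGen (R j s) a v := by
            intro a ha
            by_cases hav : a = v
            · subst hav; exact Relation.ReflTransGen.refl
            · have haT : a ∈ t := Finset.mem_erase.mpr ⟨hav, ha⟩
              exact Relation.ReflTransGen.single
                ⟨ha, hv, hav, by rw [Sym2.eq_swap]; exact hallj a haT⟩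
          have hfrom : ∀ b ∈ s, Relation.ReflTransGen (R j s) v b := by
            intro b hb
            by_cases hbv : b = v
            · subst hbv; exact Relation.ReflTransGen.refl
            · have hbT : b ∈ t := Finset.mem_erase.mpr ⟨hbv, hb⟩
              exact Relation.ReflTransGen.single ⟨hv, hb, fun h => hbv h.symm, hallj b hbT⟩
          exact fun a ha b hb => (hto a ha).trans (hfrom b hb)
  obtain ⟨i, hreach⟩ := main Finset.univ (by simpa using hn)
  -- the colour-i graph
  set G : SimpleGraph V :=
    { Adj := fun a b => a ≠ b ∧ col s(a, b) = i,
      symm := by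
        refine ⟨?_⟩; intro a b ⟨h1, h2⟩
        exact ⟨h1.symm, by rw [Sym2.eq_swap]; exact h2⟩,
      loopless := ⟨fun a h => h.1 rfl⟩ } with hG
  haveI : DecidableRel G.Adj := fun a b => instDecidableAnd
  have hconn : G.Connected := by
    rw [SimpleGraph.connected_iff]
    constructor
    · intro x y
      have h := hreach x (Finset.mem_univ x) y (Finset.mem_univ y)
      induction h with
      | refl => exact SimpleGraph.Reachable.refl _
      | tail _ hstep' ih' =>
          exact ih'.trans (SimpleGraph.Adj.reachable ⟨hstep'.2.2.1, hstep'.2.2.2⟩)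
    · rw [← Fintype.card_pos_iff]; omega
  refine ⟨i, le_trans (conn_card_le_aux G hconn) (Finset.card_le_card ?_)⟩
  intro e he
  rw [SimpleGraph.mem_edgeFinset] at he
  induction e with
  | _ a b =>
      rw [SimpleGraph.mem_edgeSet] at he
      rw [Finset.mem_filter, SimpleGraph.mem_edgeFinset, SimpleGraph.mem_edgeSet]
      exact ⟨he.1, he.2⟩
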